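/- The L5 kissing configuration is not closed under negation: there exists a point v in L5 such that -v is not in L5. In fact, exactly 24 of the 40 points of L5 come in antipodal pairs (i.e., exactly 24 points v satisfy -v ∈ L5). -/

import Mathlib

def L5 : Set (Fin 5 → ℝ) :=
  {v | (v 4 = 0 ∧ (∀ i, v i = -1 ∨ v i = 0 ∨ v i = 1) ∧
          (Finset.univ.filter fun i => v i ≠ 0).card = 2)
     ∨ (v 4 = 1 ∧ (∀ i : Fin 4, v i.castSucc = 1/2 ∨ v i.castSucc = -(1/2)) ∧
          Odd (Finset.univ.filter fun i : Fin 4 => v i.castSucc = -(1/2)).card)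
     ∨ (v 4 = -1 ∧ (∀ i : Fin 4, v i.castSucc = -1 ∨ v i.castSucc = 0 ∨ v i.castSucc = 1) ∧
          (Finset.univ.filter fun i : Fin 4 => v i.castSucc ≠ 0).card = 1)}

noncomputable section

def gg : Fin 3 → ℝ := ![-1, 0, 1]

def FF : (Fin 5 → Fin 3) → (Fin 5 → ℝ) := fun w i => gg (w i)

lemma gg_inj : Function.Injective gg := by
  intro a b h
  fin_cases a <;> fin_cases b <;> simp_all [gg] <;> norm_num at h

lemma FF_inj : Function.Injective FF := by
  intro w w' h
  funext i
  exact gg_inj (congrFun h i)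

def PP : (Fin 5 → Fin 3) → Prop := fun w =>
  w 4 = 1 ∧ (Finset.univ.filter fun i => w i ≠ 1).card = 2

instance : DecidablePred PP := fun w => by unfold PP; infer_instance

lemma fin3_cases : ∀ x : Fin 3, x = 0 ∨ x = 1 ∨ x = 2 := by decide

def AA : Set (Fin 5 → ℝ) :=
  {v | v 4 = 0 ∧ (∀ i, v i = -1 ∨ v i = 0 ∨ v i = 1) ∧
          (Finset.univ.filter fun i => v i ≠ 0).card = 2}

lemma AA_eq : AA = FF '' {w | PP w} := by
  ext v
  constructor
  · rintro ⟨h4, hval, hcard⟩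
    refine ⟨fun i => if v i = -1 then 0 else if v i = 0 then 1 else 2, ⟨?_, ?_⟩, ?_⟩
    · have := h4; simp only []
      rw [show v 4 = 0 from h4]
      norm_num
    · have he : (Finset.univ.filter fun i => (fun i => if v i = -1 then (0:Fin 3) else if v i = 0 then 1 else 2) i ≠ 1) = Finset.univ.filter fun i => v i ≠ 0 := by
        apply Finset.filter_congr
        intro i _
        rcases hval i with h | h | h <;> norm_num [h] <;> decide
      rw [he, hcard]
    · funext i
      rcases hval i with h | h | h <;> simp [FF, gg, h] <;> norm_num <;> rfl
  · rintro ⟨w, ⟨hw4, hwc⟩, rfl⟩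
    refine ⟨?_, ?_, ?_⟩
    · simp [FF, hw4, gg]
    · intro i; rcases fin3_cases (w i) with h | h | h <;> simp [FF, gg, h]
    · have he : (Finset.univ.filter fun i => FF w i ≠ 0) = Finset.univ.filter fun i => w i ≠ 1 := by
        apply Finset.filter_congr
        intro i _
        rcases fin3_cases (w i) with h | h | h <;> simp [FF, gg, h] <;> norm_num
      rw [he, hwc]

lemma key : {v | v ∈ L5 ∧ -v ∈ L5} = AA := by
  ext v
  constructor
  · rintro ⟨hv, hnv⟩
    rcases hv with h | ⟨h4, hc, _⟩ | ⟨h4, hc, _⟩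
    · exact h
    · exfalso
      have hn4 : (-v) 4 = -1 := by simp [h4]
      rcases hnv with ⟨h, _⟩ | ⟨h, _⟩ | ⟨_, hc', _⟩
      · rw [hn4] at h; norm_num at h
      · rw [hn4] at h; norm_num at h
      · rcases hc 0 with h | h <;> rcases hc' 0 with h' | h' | h' <;>
          simp only [Pi.neg_apply, h] at h' <;> norm_num at h'
    · exfalso
      have hn4 : (-v) 4 = 1 := by simp [h4]
      rcases hnv with ⟨h, _⟩ | ⟨_, hc', _⟩ | ⟨h, _⟩
      · rw [hn4] at h; norm_num at h
      · rcases hc 0 with h | h | h <;> rcases hc' 0 with h' | h' <;>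
          simp only [Pi.neg_apply, h] at h' <;> norm_num at h'
      · rw [hn4] at h; norm_num at h
  · rintro ⟨h4, hval, hcard⟩
    constructor
    · exact Or.inl ⟨h4, hval, hcard⟩
    · refine Or.inl ⟨by simp [h4], ?_, ?_⟩
      · intro i; rcases hval i with h | h | h <;> simp [h]
      · rw [← hcard]; congr 1; apply Finset.filter_congr; intro i _; simp

lemma count : (Finset.univ.filter PP).card = 24 := by decide

theorem stmt3 :
    (∃ v ∈ L5, -v ∉ L5) ∧
    Set.ncard {v | v ∈ L5 ∧ -v ∈ L5} = 24 := by
  constructor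
  · refine ⟨![1, 0, 0, 0, -1], Or.inr (Or.inr ⟨rfl, ?_, ?_⟩), ?_⟩
    · intro i; fin_cases i <;> first | rfl | norm_num [Fin.castSucc, Fin.castAdd, Fin.castLE]
    · have : (Finset.univ.filter fun i : Fin 4 => (![1, 0, 0, 0, -1] : Fin 5 → ℝ) i.castSucc ≠ 0) = {0} := by
        ext i; fin_cases i <;> norm_num [Fin.castSucc, Fin.castAdd, Fin.castLE] <;> decide
      rw [this]; rfl
    · intro h
      rcases h with ⟨h, _⟩ | ⟨_, hc, _⟩ | ⟨h, _⟩
      · rw [Pi.neg_apply, show (![1, 0, 0, 0, -1] : Fin 5 → ℝ) 4 = -1 from rfl] at h; norm_num at h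
      · have := hc 0
        simp [Fin.castSucc, Fin.castAdd, Fin.castLE] at this
        norm_num at this
      · rw [Pi.neg_apply, show (![1, 0, 0, 0, -1] : Fin 5 → ℝ) 4 = -1 from rfl] at h; norm_num at h
  · rw [key, AA_eq]
    rw [show {w | PP w} = ↑(Finset.univ.filter PP) by ext w; simp]
    rw [Set.ncard_image_of_injective _ FF_inj, Set.ncard_coe_finset, count]

end
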